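/- Let (W, ▷) be a well-founded frame and fix a syntactical λ-algebra (V, ·, ⟦ ⟧). Then I(•(A → B))^η_p = I(•A → •B)^η_p holds for all type expressions A and B, all hereditary type environments η, and all p ∈ W, if and only if the accessibility relation ▷ is locally linear. -/

import Mathlib

namespace LambdaA

/-! ### Type expressions (de Bruijn representation for `μ`-binders) -/

inductive Ty : Type
  | var : ℕ → Ty
  | arrow : Ty → Ty → Ty
  | box : Ty → Ty
  | mu : Ty → Ty
  deriving DecidableEq

namespace Ty

def rename : (ℕ → ℕ) → Ty → Ty
  | f, var n => var (f n)
  | f, arrow A B => arrow (rename f A) (rename f B)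
  | f, box A => box (rename f A)
  | f, mu A => mu (rename (fun n => match n with | 0 => 0 | Nat.succ m => f m + 1) A)

def shiftUp : Ty → Ty := rename Nat.succ

def subst : (ℕ → Ty) → Ty → Ty
  | σ, var n => σ n
  | σ, arrow A B => arrow (subst σ A) (subst σ B)
  | σ, box A => box (subst σ A)
  | σ, mu A => mu (subst (fun n => match n with | 0 => var 0 | Nat.succ m => shiftUp (σ m)) A)

end Ty

/-- `openT A B`: instantiate the outermost bound variable (index `0`) of the body `A` by `B`. -/
def openT (A B : Ty) : Ty :=
  Ty.subst (fun n => match n with | 0 => B | Nat.succ m => Ty.var m) A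

/-- `substFree A X B` is the capture-avoiding substitution `A[B/X]` for the free variable `X`. -/
def substFree (A : Ty) (X : ℕ) (B : Ty) : Ty :=
  Ty.subst (fun n => if n = X then B else Ty.var n) A

/-- The unfolding `μX.A ↦ A[μX.A/X]` of a recursive type. -/
def unfoldMu (A : Ty) : Ty := openT A (Ty.mu A)

/-- Free occurrence of a type variable in a type expression. -/
def freeInTy : ℕ → Ty → Prop
  | X, .var n => n = X
  | X, .arrow A B => freeInTy X A ∨ freeInTy X B
  | X, .box A => freeInTy X A
  | X, .mu A => freeInTy (X + 1) A

/-- Auxiliary ⊤-variant test.  `tvAux A d t` scans the tail of `A`, where `d` is the number of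
`μ`-binders passed so far and `t` is the number of (outermost) such binders inside which a `•`
has already been encountered.  A variable qualifies iff it is bound by one of the `μ`-binders
and at least one `•` occurs inside that binder. -/
def tvAux : Ty → ℕ → ℕ → Bool
  | .var j, d, t => decide (d - t ≤ j ∧ j < d)
  | .box A, d, _ => tvAux A d d
  | .mu A, d, t => tvAux A (d + 1) t
  | .arrow _ B, d, t => tvAux B d t

/-- `A` is a ⊤-variant. -/
def IsTV (A : Ty) : Prop := tvAux A 0 0 = true

/-- `Proper A X` : the type expression `A` is proper in the (free) variable `X`. -/
def Proper : Ty → ℕ → Prop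
  | .var n, X => n ≠ X
  | .box _, _ => True
  | .arrow A B, X => (Proper A X ∧ Proper B X) ∨ IsTV B
  | .mu A, X => Proper A (X + 1) ∨ IsTV (.mu A)

/-- Well-formed type expressions: every recursive type `μX.A` has `A` proper in `X`. -/
def WF : Ty → Prop
  | .var _ => True
  | .arrow A B => WF A ∧ WF B
  | .box A => WF A
  | .mu A => WF A ∧ Proper A 0

/-- `⊤ = μX.•X`. -/
def tyTop : Ty := .mu (.box (.var 0))

/-- `•ⁿ A`. -/
def boxN (n : ℕ) (A : Ty) : Ty := Ty.box^[n] A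

/-- The equivalences `≅` (`s = false`) and `≃` (`s = true`) on type expressions. -/
inductive TyEq : Bool → Ty → Ty → Prop
  | refl (s : Bool) (A : Ty) : TyEq s A A
  | symm {s : Bool} {A B : Ty} : TyEq s A B → TyEq s B A
  | trans {s : Bool} {A B C : Ty} : TyEq s A B → TyEq s B C → TyEq s A C
  | boxCongr {s : Bool} {A B : Ty} : TyEq s A B → TyEq s (.box A) (.box B)
  | arrowCongr {s : Bool} {A B C D : Ty} :
      TyEq s A C → TyEq s B D → TyEq s (.arrow A B) (.arrow C D)
  | arrowTop (s : Bool) (A : Ty) : TyEq s (.arrow A tyTop) tyTop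
  | fix (s : Bool) (A : Ty) : TyEq s (.mu A) (unfoldMu A)
  | uniq {s : Bool} {A C : Ty} : TyEq s A (openT C A) → Proper C 0 → TyEq s A (.mu C)
  | kl (A B : Ty) : TyEq true (.box (.arrow A B)) (.arrow (.box A) (.box B))

/-! ### Subtyping -/

/-- Subtyping assumptions: finite sets of pairs of type variables. -/
abbrev Assum := Finset (ℕ × ℕ)

/-- Well-formedness of a subtyping assumption: every type variable occurs at most once. -/
def AssumOK (γ : Assum) : Prop :=
  (∀ p ∈ γ, (p : ℕ × ℕ).1 ≠ p.2) ∧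
    ∀ p ∈ γ, ∀ q ∈ γ, p ≠ q →
      (p : ℕ × ℕ).1 ≠ (q : ℕ × ℕ).1 ∧ p.1 ≠ q.2 ∧ p.2 ≠ q.1 ∧ p.2 ≠ q.2

/-- `X` occurs in the subtyping assumption `γ`. -/
def AssumVar (γ : Assum) (X : ℕ) : Prop :=
  ∃ p ∈ γ, (p : ℕ × ℕ).1 = X ∨ (p : ℕ × ℕ).2 = X

/-- Derivability of subtyping judgments `γ ⊢ A ⪯ B`. -/
inductive Sub : Assum → Ty → Ty → Prop
  | assump {γ : Assum} {X Y : ℕ} : AssumOK γ → (X, Y) ∈ γ → Sub γ (.var X) (.var Y)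
  | top {γ : Assum} (A : Ty) : AssumOK γ → Sub γ A tyTop
  | refl {γ : Assum} {A B : Ty} : AssumOK γ → TyEq true A B → Sub γ A B
  | trans {γ₁ γ₂ : Assum} {A B C : Ty} :
      Sub γ₁ A B → Sub γ₂ B C → AssumOK (γ₁ ∪ γ₂) → Sub (γ₁ ∪ γ₂) A C
  | boxMono {γ : Assum} {A B : Ty} : Sub γ A B → Sub γ (.box A) (.box B)
  | arrowMono {γ₁ γ₂ : Assum} {A A' B B' : Ty} :
      Sub γ₁ A' A → Sub γ₂ B B' → AssumOK (γ₁ ∪ γ₂) →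
      Sub (γ₁ ∪ γ₂) (.arrow A B) (.arrow A' B')
  | muMono {γ : Assum} {X Y : ℕ} {A B : Ty} :
      AssumOK (insert (X, Y) γ) →
      Sub (insert (X, Y) γ) (openT A (.var X)) (openT B (.var Y)) →
      ¬ AssumVar γ X → ¬ AssumVar γ Y →
      ¬ freeInTy X (openT B (.var Y)) → ¬ freeInTy Y (openT A (.var X)) →
      Proper (openT A (.var X)) X → Proper (openT B (.var Y)) Y →
      Sub γ (.mu A) (.mu B)
  | approx {γ : Assum} (A : Ty) : AssumOK γ → Sub γ A (.box A)

/-! ### Untyped λ-terms (locally-nameless representation) -/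

inductive Tm : Type
  | bvar : ℕ → Tm
  | fvar : ℕ → Tm
  | lam : Tm → Tm
  | app : Tm → Tm → Tm
  deriving DecidableEq

def openTmAux (N : Tm) : ℕ → Tm → Tm
  | _, .fvar y => .fvar y
  | k, .bvar i => if i = k then N else .bvar i
  | k, .lam M => .lam (openTmAux N (k + 1) M)
  | k, .app M₁ M₂ => .app (openTmAux N k M₁) (openTmAux N k M₂)

/-- Instantiate the outermost bound variable of the body `M` by `N`. -/
def openTm (M N : Tm) : Tm := openTmAux N 0 M

/-- `substTm M x N` is the substitution `M[N/x]` for the free variable `x`. -/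
def substTm : Tm → ℕ → Tm → Tm
  | .bvar i, _, _ => .bvar i
  | .fvar y, x, N => if y = x then N else .fvar y
  | .lam M, x, N => .lam (substTm M x N)
  | .app M₁ M₂, x, N => .app (substTm M₁ x N) (substTm M₂ x N)

/-- Free occurrence of an individual variable in a λ-term. -/
def freeTm : ℕ → Tm → Prop
  | _, .bvar _ => False
  | x, .fvar y => y = x
  | x, .lam M => freeTm x M
  | x, .app M₁ M₂ => freeTm x M₁ ∨ freeTm x M₂

/-- One-step β-reduction. -/
inductive Step : Tm → Tm → Prop
  | beta (M N : Tm) : Step (.app (.lam M) N) (openTm M N)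
  | appL {M M' : Tm} (N : Tm) : Step M M' → Step (.app M N) (.app M' N)
  | appR (M : Tm) {N N' : Tm} : Step N N' → Step (.app M N) (.app M N')
  | lamCongr {M M' : Tm} : Step M M' → Step (.lam M) (.lam M')

/-- `→*β`, the reflexive-transitive closure of β-reduction. -/
def Steps : Tm → Tm → Prop := Relation.ReflTransGen Step

/-- β-convertibility `=β`. -/
inductive BetaEq : Tm → Tm → Prop
  | step {M N : Tm} : Step M N → BetaEq M N
  | refl (M : Tm) : BetaEq M M
  | symm {M N : Tm} : BetaEq M N → BetaEq N M
  | trans {M N K : Tm} : BetaEq M N → BetaEq N K → BetaEq M K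

/-! ### Typing -/

/-- Typing contexts: finite sets of (variable, type) pairs. -/
abbrev Ctx := Finset (ℕ × Ty)

/-- Well-formedness of a typing context (functionality). -/
def CtxOK (Γ : Ctx) : Prop :=
  ∀ p ∈ Γ, ∀ q ∈ Γ, (p : ℕ × Ty).1 = (q : ℕ × Ty).1 → p = q

/-- `•Γ`. -/
def boxCtx (Γ : Ctx) : Ctx := Γ.image fun p => (p.1, Ty.box p.2)

/-- All types in the context are well-formed type expressions. -/
def CtxWF (Γ : Ctx) : Prop := ∀ p ∈ Γ, WF (p : ℕ × Ty).2

/-- The typing system λA. -/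
inductive Typing : Ctx → Tm → Ty → Prop
  | var {Γ : Ctx} {x : ℕ} {A : Ty} : CtxOK Γ → (x, A) ∈ Γ → Typing Γ (.fvar x) A
  | shift {Γ : Ctx} {M : Tm} {A : Ty} : Typing (boxCtx Γ) M (.box A) → Typing Γ M A
  | top {Γ : Ctx} (M : Tm) : CtxOK Γ → Typing Γ M tyTop
  | sub {Γ : Ctx} {M : Tm} {A B : Ty} : Typing Γ M A → Sub ∅ A B → Typing Γ M B
  | lamI {Γ : Ctx} {x : ℕ} {A B : Ty} {M : Tm} :
      ¬ freeTm x M →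
      Typing (insert (x, A) Γ) (openTm M (.fvar x)) B →
      Typing Γ (.lam M) (.arrow A B)
  | appE {Γ₁ Γ₂ : Ctx} {M N : Tm} {A B : Ty} :
      Typing Γ₁ M (.arrow A B) → Typing Γ₂ N A → CtxOK (Γ₁ ∪ Γ₂) →
      Typing (Γ₁ ∪ Γ₂) (.app M N) B

/-! ### Frames, λ-algebras and the semantics of types -/

/-- The accessibility relation is conversely well-founded. -/
def ConverselyWF {W : Type*} (acc : W → W → Prop) : Prop :=
  WellFounded fun q p => acc p q

/-- Local linearity of the accessibility relation. -/
def LocallyLinear {W : Type*} (acc : W → W → Prop) : Prop :=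
  ∀ p q, acc p q → ∃ r, Relation.ReflTransGen acc p r ∧ acc r q ∧
    ∀ s, acc r s → Relation.ReflTransGen acc q s

/-- Hereditary type environments. -/
def Hereditary {W : Type*} {V : Type*} (acc : W → W → Prop) (η : ℕ → W → Set V) : Prop :=
  ∀ X p q, acc p q → η X p ⊆ η X q

/-- Syntactical λ-algebras of the untyped λ-calculus. -/
structure LambdaAlgebra (V : Type*) where
  nonempty : Nonempty V
  ap : V → V → V
  den : Tm → (ℕ → V) → V
  den_fvar : ∀ x ρ, den (.fvar x) ρ = ρ x
  den_app : ∀ M N ρ, den (.app M N) ρ = ap (den M ρ) (den N ρ)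
  den_lam : ∀ M x ρ v, ¬ freeTm x M →
    ap (den (.lam M) ρ) v = den (openTm M (.fvar x)) (Function.update ρ x v)
  den_ext : ∀ M ρ ρ', (∀ x, freeTm x M → ρ x = ρ' x) → den M ρ = den M ρ'
  den_beta : ∀ M N ρ, BetaEq M N → den M ρ = den N ρ

/-- The interpretation `I(A)^η_p` of type expressions over a frame, packaged together with
its defining (recursion) equations. -/
structure Interp (W : Type*) (acc : W → W → Prop) (V : Type*) (ap : V → V → V) where
  I : Ty → (ℕ → W → Set V) → W → Set V
  I_tv : ∀ A η p, WF A → IsTV A → I A η p = Set.univ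
  I_var : ∀ X η p, I (.var X) η p = η X p
  I_box : ∀ A η p, WF A → ¬ IsTV (Ty.box A) →
    I (.box A) η p = {u | ∀ q, acc p q → u ∈ I A η q}
  I_arrow : ∀ A B η p, WF A → WF B → ¬ IsTV (Ty.arrow A B) →
    I (.arrow A B) η p =
      {u | ∀ q, Relation.ReflTransGen acc p q → ∀ v ∈ I A η q, ap u v ∈ I B η q}
  I_mu : ∀ A η p, WF (Ty.mu A) → ¬ IsTV (Ty.mu A) →
    I (.mu A) η p = I (unfoldMu A) η p

/-! ### Tail finiteness and related notions -/

/-- The sets `TF^V`. -/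
inductive TFmem : Set ℕ → Ty → Prop
  | var {V : Set ℕ} {X : ℕ} : X ∉ V → TFmem V (.var X)
  | box {V : Set ℕ} {A : Ty} : TFmem V A → TFmem V (.box A)
  | arrow {V : Set ℕ} (A : Ty) {B : Ty} : TFmem V B → TFmem V (.arrow A B)
  | mu {V : Set ℕ} {A : Ty} : WF (.mu A) → TFmem ({0} ∪ (Nat.succ '' V)) A → TFmem V (.mu A)

/-- Shapes `•^{m₀}(B₁ → •^{m₁}(B₂ → ⋯ → •^{m_{n-1}}(Bₙ → •^{mₙ} X)⋯))`. -/
inductive TFShape : Ty → Prop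
  | var (X : ℕ) : TFShape (.var X)
  | box {A : Ty} : TFShape A → TFShape (.box A)
  | arrow (A : Ty) {B : Ty} : TFShape B → TFShape (.arrow A B)

/-- Tail finite type expressions. -/
def TailFinite (A : Ty) : Prop := ∃ C, TFShape C ∧ WF C ∧ TyEq false A C

-- Effectively occurring type variables, positively (`petv`) and negatively (`netv`).
mutual
  def petv : Ty → Finset ℕ
    | .var X => {X}
    | .box A => if tvAux (.box A) 0 0 then ∅ else petv A
    | .arrow A B => if tvAux (.arrow A B) 0 0 then ∅ else netv A ∪ petv B
    | .mu A =>
        if tvAux (.mu A) 0 0 then ∅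
        else if 0 ∈ netv A then ((petv A ∪ netv A).erase 0).image (· - 1)
        else ((petv A).erase 0).image (· - 1)
  def netv : Ty → Finset ℕ
    | .var _ => ∅
    | .box A => if tvAux (.box A) 0 0 then ∅ else netv A
    | .arrow A B => if tvAux (.arrow A B) 0 0 then ∅ else petv A ∪ netv B
    | .mu A =>
        if tvAux (.mu A) 0 0 then ∅
        else if 0 ∈ netv A then ((netv A ∪ petv A).erase 0).image (· - 1)
        else ((netv A).erase 0).image (· - 1)
end

/-- Positively finite type expressions. -/
def PosFin (A : Ty) : Prop :=
  ∀ (s : Bool) (B C : Ty) (X : ℕ), WF B → WF C →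
    TyEq s A (substFree B X C) → X ∈ petv B → X ∉ netv B → TailFinite C

/-- Negatively finite type expressions. -/
def NegFin (A : Ty) : Prop :=
  ∀ (s : Bool) (B C : Ty) (X : ℕ), WF B → WF C →
    TyEq s A (substFree B X C) → X ∈ netv B → X ∉ petv B → TailFinite C

/-! ### Head normal forms, maximality, normal forms -/

/-- `y N₁ … Nₙ` with every argument satisfying `P`. -/
inductive SpineArgs (P : Tm → Prop) : Tm → Prop
  | fvar (x : ℕ) : SpineArgs P (.fvar x)
  | bvar (i : ℕ) : SpineArgs P (.bvar i)
  | app {M N : Tm} : SpineArgs P M → P N → SpineArgs P (.app M N)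

/-- Head normal forms `λx₁…λxₘ. y N₁ … Nₙ` whose arguments satisfy `P`. -/
inductive HNFP (P : Tm → Prop) : Tm → Prop
  | spine {M : Tm} : SpineArgs P M → HNFP P M
  | lam {M : Tm} : HNFP P M → HNFP P (.lam M)

/-- Head normal forms. -/
def HNF : Tm → Prop := HNFP fun _ => True

/-- Maximality at a given depth. -/
def MaxAt : ℕ → Tm → Prop
  | 0, _ => True
  | n + 1, M => ∃ M', Steps M M' ∧ HNFP (MaxAt n) M'

/-- Maximal λ-terms: the Böhm tree contains no `⊥`. -/
def Maximal (M : Tm) : Prop := ∀ n, MaxAt n M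

/-- β-normal forms. -/
def NormalForm (M : Tm) : Prop := ∀ N, ¬ Step M N

/-- Type expressions without any occurrence of the modal operator `•`. -/
def NoBox : Ty → Prop
  | .var _ => True
  | .arrow A B => NoBox A ∧ NoBox B
  | .box _ => False
  | .mu A => NoBox A

/-! ### The modal logic LAμ and its Kripke semantics -/

/-- The logic LAμ (formulae are type expressions). -/
inductive LAmu : Finset Ty → Ty → Prop
  | assump {Γ : Finset Ty} {A : Ty} : LAmu (insert A Γ) A
  | nec {Γ₁ : Finset Ty} (Γ₂ : Finset Ty) {A : Ty} :
      LAmu Γ₁ A → LAmu (Γ₁.image Ty.box ∪ Γ₂) (.box A)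
  | four {Γ : Finset Ty} {A : Ty} : LAmu Γ (.box A) → LAmu Γ (.box (.box A))
  | impI {Γ : Finset Ty} {A B : Ty} : LAmu (insert A Γ) B → LAmu Γ (.arrow A B)
  | impE {Γ₁ Γ₂ : Finset Ty} {A B : Ty} :
      LAmu Γ₁ (.arrow A B) → LAmu Γ₂ A → LAmu (Γ₁ ∪ Γ₂) B
  | fold {Γ : Finset Ty} {A : Ty} : LAmu Γ (unfoldMu A) → LAmu Γ (.mu A)
  | unfold {Γ : Finset Ty} {A : Ty} : LAmu Γ (.mu A) → LAmu Γ (unfoldMu A)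
  | lrule {Γ : Finset Ty} {A B : Ty} :
      LAmu Γ (.arrow (.box A) (.box B)) → LAmu Γ (.box (.arrow A B))
  | approx {Γ : Finset Ty} {A : Ty} : LAmu Γ A → LAmu Γ (.box A)

/-- The Kripke satisfaction relation over an LA-frame `(W, tri, R)` under a valuation `ξ`,
packaged with its defining (recursion) equations. -/
structure SatFun {W : Type*} (tri R : W → W → Prop) (ξ : ℕ → W → Prop) where
  sat : Ty → W → Prop
  sat_tv : ∀ A p, WF A → IsTV A → sat A p
  sat_var : ∀ X p, sat (.var X) p ↔ ξ X p
  sat_box : ∀ A p, WF A → ¬ IsTV (Ty.box A) →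
    (sat (.box A) p ↔ ∀ q, tri p q → sat A q)
  sat_arrow : ∀ A B p, WF A → WF B → ¬ IsTV (Ty.arrow A B) →
    (sat (.arrow A B) p ↔ ∀ q, R p q → sat A q → sat B q)
  sat_mu : ∀ A p, WF (Ty.mu A) → ¬ IsTV (Ty.mu A) →
    (sat (.mu A) p ↔ sat (unfoldMu A) p)

/-! ### Auxiliary metatheory -/

/-- The lifting of a substitution under a `μ`-binder (as used in `Ty.subst`). -/
def liftS (σ : ℕ → Ty) : ℕ → Ty :=
  fun n => match n with | 0 => .var 0 | Nat.succ m => Ty.shiftUp (σ m)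

/-- The lifting of a renaming under a `μ`-binder (as used in `Ty.rename`). -/
def liftR (f : ℕ → ℕ) : ℕ → ℕ :=
  fun n => match n with | 0 => 0 | Nat.succ m => f m + 1

lemma subst_mu (σ : ℕ → Ty) (A : Ty) :
    Ty.subst σ (.mu A) = .mu (Ty.subst (liftS σ) A) := rfl

lemma rename_mu (f : ℕ → ℕ) (A : Ty) :
    Ty.rename f (.mu A) = .mu (Ty.rename (liftR f) A) := rfl

lemma shiftUp_var (n : ℕ) : Ty.shiftUp (.var n) = .var (n + 1) := rfl

/-- Number of leading `μ`-binders. -/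
def headMu : Ty → ℕ
  | .mu A => headMu A + 1
  | _ => 0

/-- The variable at the end of a pure `μ`-spine, if any. -/
def spineVar : Ty → Option ℕ
  | .var k => some k
  | .mu A => spineVar A
  | _ => none

lemma liftS_lt {σ : ℕ → Ty} {d : ℕ} (h : ∀ j, j < d → σ j = .var j) :
    ∀ j, j < d + 1 → liftS σ j = .var j := by
  intro j hj
  cases j with
  | zero => rfl
  | succ m => simp only [liftS, h m (by omega), shiftUp_var]

lemma tvAux_subst (A : Ty) : ∀ (σ : ℕ → Ty) (d t : ℕ),
    (∀ j, j < d → σ j = .var j) → tvAux A d t = true → tvAux (Ty.subst σ A) d t = true := by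
  induction A with
  | var j =>
    intro σ d t h ht
    simp only [tvAux, decide_eq_true_eq] at ht
    show tvAux (σ j) d t = true
    rw [h j ht.2]
    simpa [tvAux] using ht
  | arrow A B ihA ihB =>
    intro σ d t h ht
    exact ihB σ d t h ht
  | box A ih =>
    intro σ d t h ht
    exact ih σ d d h ht
  | mu A ih =>
    intro σ d t h ht
    exact ih (liftS σ) (d + 1) t (liftS_lt h) ht

lemma IsTV_subst {A : Ty} (σ : ℕ → Ty) (h : IsTV A) : IsTV (Ty.subst σ A) :=
  tvAux_subst A σ 0 0 (fun j hj => absurd hj (Nat.not_lt_zero j)) h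

lemma tvAux_rename (A : Ty) : ∀ (f : ℕ → ℕ) (d t : ℕ),
    (∀ j, j < d → f j = j) → (∀ j, d ≤ j → d ≤ f j) →
    tvAux (Ty.rename f A) d t = tvAux A d t := by
  induction A with
  | var n =>
    intro f d t h1 h2
    show tvAux (.var (f n)) d t = tvAux (.var n) d t
    by_cases hn : n < d
    · rw [h1 n hn]
    · have := h2 n (by omega)
      simp only [tvAux]
      rw [decide_eq_decide]
      omega
  | box A ih =>
    intro f d t h1 h2
    exact ih f d d h1 h2
  | arrow A B ihA ihB =>
    intro f d t h1 h2
    exact ihB f d t h1 h2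
  | mu A ih =>
    intro f d t h1 h2
    refine ih (liftR f) (d + 1) t ?_ ?_
    · intro j hj
      cases j with
      | zero => rfl
      | succ m => show f m + 1 = m + 1; rw [h1 m (by omega)]
    · intro j hj
      cases j with
      | zero => omega
      | succ m => show d + 1 ≤ f m + 1; have := h2 m (by omega); omega

lemma IsTV_rename {A : Ty} (f : ℕ → ℕ) : IsTV (Ty.rename f A) ↔ IsTV A := by
  unfold IsTV
  rw [tvAux_rename A f 0 0 (fun j hj => absurd hj (Nat.not_lt_zero j)) (fun j _ => Nat.zero_le _)]

lemma freeInTy_rename (A : Ty) : ∀ (f : ℕ → ℕ) (X : ℕ),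
    freeInTy X (Ty.rename f A) → ∃ j, freeInTy j A ∧ f j = X := by
  induction A with
  | var n => intro f X h; exact ⟨n, rfl, h⟩
  | box A ih => intro f X h; exact ih f X h
  | arrow A B ihA ihB =>
    intro f X h
    rcases h with h | h
    · obtain ⟨j, hj, he⟩ := ihA f X h; exact ⟨j, Or.inl hj, he⟩
    · obtain ⟨j, hj, he⟩ := ihB f X h; exact ⟨j, Or.inr hj, he⟩
  | mu A ih =>
    intro f X h
    obtain ⟨j, hj, he⟩ := ih (liftR f) (X + 1) h
    cases j with
    | zero => simp [liftR] at he
    | succ m =>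
      refine ⟨m, hj, ?_⟩
      have : f m + 1 = X + 1 := he
      omega

lemma Proper_notFree (A : Ty) : ∀ X, ¬ freeInTy X A → Proper A X := by
  induction A with
  | var n => intro X h; exact h
  | box A _ => intro X _; trivial
  | arrow A B ihA ihB =>
    intro X h
    exact Or.inl ⟨ihA X (fun hf => h (Or.inl hf)), ihB X (fun hf => h (Or.inr hf))⟩
  | mu A ih => intro X h; exact Or.inl (ih (X + 1) h)

lemma Proper_rename (A : Ty) : ∀ (f : ℕ → ℕ) (X : ℕ),
    f X = X → (∀ j, j ≠ X → f j ≠ X) → Proper A X → Proper (Ty.rename f A) X := by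
  induction A with
  | var n => intro f X _ h2 hp; exact h2 n hp
  | box A _ => intro f X _ _ _; trivial
  | arrow A B ihA ihB =>
    intro f X h1 h2 hp
    rcases hp with ⟨ha, hb⟩ | htv
    · exact Or.inl ⟨ihA f X h1 h2 ha, ihB f X h1 h2 hb⟩
    · exact Or.inr ((IsTV_rename f).mpr htv)
  | mu A ih =>
    intro f X h1 h2 hp
    rcases hp with hp | htv
    · refine Or.inl (ih (liftR f) (X + 1) ?_ ?_ hp)
      · show f X + 1 = X + 1; rw [h1]
      · intro j hj
        cases j with
        | zero => simp [liftR]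
        | succ m =>
          show f m + 1 ≠ X + 1
          have := h2 m (by omega)
          omega
    · have := (IsTV_rename (A := .mu A) f).mpr htv
      rw [rename_mu] at this
      exact Or.inr this

lemma WF_rename (A : Ty) : ∀ f, WF A → WF (Ty.rename f A) := by
  induction A with
  | var n => intro f _; trivial
  | box A ih => intro f h; exact ih f h
  | arrow A B ihA ihB => intro f h; exact ⟨ihA f h.1, ihB f h.2⟩
  | mu A ih =>
    intro f h
    refine ⟨ih (liftR f) h.1, ?_⟩
    refine Proper_rename A (liftR f) 0 rfl ?_ h.2
    intro j hj
    cases j with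
    | zero => omega
    | succ m => show f m + 1 ≠ 0; omega

lemma Proper_subst (A : Ty) : ∀ (σ : ℕ → Ty) (X : ℕ),
    σ X = .var X → (∀ j, j ≠ X → ¬ freeInTy X (σ j)) → Proper A X → Proper (Ty.subst σ A) X := by
  induction A with
  | var n =>
    intro σ X h1 h2 hp
    exact Proper_notFree (σ n) X (h2 n hp)
  | box A _ => intro σ X _ _ _; trivial
  | arrow A B ihA ihB =>
    intro σ X h1 h2 hp
    rcases hp with ⟨ha, hb⟩ | htv
    · exact Or.inl ⟨ihA σ X h1 h2 ha, ihB σ X h1 h2 hb⟩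
    · exact Or.inr (IsTV_subst σ htv)
  | mu A ih =>
    intro σ X h1 h2 hp
    rcases hp with hp | htv
    · refine Or.inl (ih (liftS σ) (X + 1) ?_ ?_ hp)
      · show Ty.shiftUp (σ X) = .var (X + 1); rw [h1]; rfl
      · intro j hj
        cases j with
        | zero =>
          show ¬ freeInTy (X + 1) (.var 0)
          simp [freeInTy]
        | succ m =>
          intro hf
          obtain ⟨i, hi, he⟩ := freeInTy_rename (σ m) Nat.succ (X + 1) hf
          have him : i = X := by omega
          exact h2 m (by omega) (him ▸ hi)
    · have := IsTV_subst (A := .mu A) σ htv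
      rw [subst_mu] at this
      exact Or.inr this

lemma WF_subst (A : Ty) : ∀ σ, WF A → (∀ n, WF (σ n)) → WF (Ty.subst σ A) := by
  induction A with
  | var n => intro σ _ h; exact h n
  | box A ih => intro σ h hσ; exact ih σ h hσ
  | arrow A B ihA ihB => intro σ h hσ; exact ⟨ihA σ h.1 hσ, ihB σ h.2 hσ⟩
  | mu A ih =>
    intro σ h hσ
    refine ⟨ih (liftS σ) h.1 ?_, ?_⟩
    · intro n
      cases n with
      | zero => trivial
      | succ m => exact WF_rename (σ m) Nat.succ (hσ m)
    · refine Proper_subst A (liftS σ) 0 rfl ?_ h.2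
      intro j hj
      cases j with
      | zero => omega
      | succ m =>
        intro hf
        obtain ⟨i, _, he⟩ := freeInTy_rename (σ m) Nat.succ 0 hf
        omega

/-- The substitution used in `unfoldMu`. -/
def sigma0 (A : Ty) : ℕ → Ty := fun n => match n with | 0 => .mu A | Nat.succ m => .var m

lemma unfoldMu_eq (A : Ty) : unfoldMu A = Ty.subst (sigma0 A) A := rfl

lemma WF_unfold {A : Ty} (h : WF (.mu A)) : WF (unfoldMu A) := by
  rw [unfoldMu_eq]
  refine WF_subst A (sigma0 A) h.1 ?_
  intro n
  cases n with
  | zero => exact h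
  | succ m => trivial

lemma headMu_rename (A : Ty) : ∀ f, headMu (Ty.rename f A) = headMu A := by
  induction A with
  | var n => intro f; rfl
  | box A _ => intro f; rfl
  | arrow A B _ _ => intro f; rfl
  | mu A ih => intro f; show headMu (Ty.rename (liftR f) A) + 1 = headMu A + 1; rw [ih]

lemma headMu_subst (A : Ty) : ∀ σ : ℕ → Ty,
    (∀ k, spineVar A = some k → ∃ j, (liftS^[headMu A] σ) k = Ty.var j) →
    headMu (Ty.subst σ A) = headMu A := by
  induction A with
  | var k =>
    intro σ h
    obtain ⟨j, hj⟩ := h k rfl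
    show headMu (σ k) = 0
    have : σ k = Ty.var j := by exact hj
    rw [this]; rfl
  | box A _ => intro σ _; rfl
  | arrow A B _ _ => intro σ _; rfl
  | mu A ih =>
    intro σ h
    show headMu (Ty.subst (liftS σ) A) + 1 = headMu A + 1
    rw [ih (liftS σ) ?_]
    intro k hk
    have := h k hk
    rwa [show headMu (Ty.mu A) = headMu A + 1 from rfl, Function.iterate_succ_apply] at this

lemma sigma0_iterate (A : Ty) : ∀ n k, k ≠ n → ∃ j, (liftS^[n] (sigma0 A)) k = Ty.var j := by
  intro n
  induction n with
  | zero =>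
    intro k hk
    cases k with
    | zero => omega
    | succ m => exact ⟨m, rfl⟩
  | succ n ih =>
    intro k hk
    rw [Function.iterate_succ_apply']
    cases k with
    | zero => exact ⟨0, rfl⟩
    | succ m =>
      obtain ⟨j, hj⟩ := ih m (by omega)
      exact ⟨j + 1, by show Ty.shiftUp ((liftS^[n] (sigma0 A)) m) = _; rw [hj]; rfl⟩

lemma tvAux_spine (A : Ty) : ∀ d t k, spineVar A = some k → d + headMu A ≤ k →
    tvAux A d t = false := by
  induction A with
  | var n =>
    intro d t k h hd
    have : n = k := by simpa [spineVar] using h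
    subst this
    simp only [tvAux, headMu] at *
    rw [decide_eq_false_iff_not]
    omega
  | box A _ => intro d t k h; simp [spineVar] at h
  | arrow A B _ _ => intro d t k h; simp [spineVar] at h
  | mu A ih =>
    intro d t k h hd
    refine ih (d + 1) t k h ?_
    have : headMu (Ty.mu A) = headMu A + 1 := rfl
    omega

lemma spine_self_not_proper (A : Ty) : ∀ X, spineVar A = some (headMu A + X) →
    Proper A X → False := by
  induction A with
  | var n =>
    intro X h hp
    have : n = X := by simpa [spineVar, headMu] using h
    exact hp this
  | box A _ => intro X h; simp [spineVar] at h
  | arrow A B _ _ => intro X h; simp [spineVar] at h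
  | mu A ih =>
    intro X h hp
    have h' : spineVar A = some (headMu A + (X + 1)) := by
      have hh : spineVar A = some (headMu A + 1 + X) := h
      rw [hh]
      congr 1
      omega
    rcases hp with hp | htv
    · exact ih (X + 1) h' hp
    · have hfalse := tvAux_spine A 1 0 (headMu A + (X + 1)) h' (by omega)
      have : tvAux (Ty.mu A) 0 0 = tvAux A 1 0 := rfl
      unfold IsTV at htv
      rw [this, hfalse] at htv
      exact Bool.false_ne_true htv

lemma spine_ge_headMu (A : Ty) : ∀ k, WF A → spineVar A = some k → headMu A ≤ k := by
  induction A with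
  | var n => intro k _ _; exact Nat.zero_le _
  | box A _ => intro k _ h; simp [spineVar] at h
  | arrow A B _ _ => intro k _ h; simp [spineVar] at h
  | mu A ih =>
    intro k hWF h
    have hWF' : WF A ∧ Proper A 0 := hWF
    have h1 : headMu A ≤ k := ih k hWF'.1 h
    have h2 : k ≠ headMu A := by
      intro he
      have hh : spineVar A = some k := h
      exact spine_self_not_proper A 0 (by rw [hh, he, Nat.add_zero]) hWF'.2
    show headMu A + 1 ≤ k
    omega

lemma headMu_unfold {A : Ty} (h : WF (.mu A)) : headMu (unfoldMu A) = headMu A := by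
  rw [unfoldMu_eq]
  refine headMu_subst A (sigma0 A) ?_
  intro k hk
  refine sigma0_iterate A (headMu A) k ?_
  intro he
  subst he
  exact spine_self_not_proper A 0 (by rw [hk, Nat.add_zero]) h.2

/-- Hereditariness of the interpretation (along a single accessibility step). -/
lemma hered_step {W : Type*} {acc : W → W → Prop} {V : Type*} {ap : V → V → V}
    (Int : Interp W acc V ap) (hwf : ConverselyWF acc)
    {η : ℕ → W → Set V} (hη : Hereditary acc η) :
    ∀ p q, acc p q → ∀ A, WF A → Int.I A η p ⊆ Int.I A η q := by
  intro p
  induction p using hwf.induction with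
  | _ p IH =>
  intro q hpq
  suffices h : ∀ n A, headMu A < n → WF A → Int.I A η p ⊆ Int.I A η q by
    intro A hA
    exact h (headMu A + 1) A (Nat.lt_succ_self _) hA
  intro n
  induction n with
  | zero => intro A h; omega
  | succ n ihn =>
    intro A hlt hWF
    by_cases htv : IsTV A
    · intro u _
      rw [Int.I_tv A η q hWF htv]
      trivial
    · cases A with
      | var X =>
        rw [Int.I_var, Int.I_var]
        exact hη X p q hpq
      | box A' =>
        have hWF' : WF A' := hWF
        rw [Int.I_box A' η p hWF' htv, Int.I_box A' η q hWF' htv]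
        intro u hu s hqs
        exact IH q hpq s hqs A' hWF' (hu q hpq)
      | arrow A' B' =>
        have hWF' : WF A' ∧ WF B' := hWF
        rw [Int.I_arrow A' B' η p hWF'.1 hWF'.2 htv, Int.I_arrow A' B' η q hWF'.1 hWF'.2 htv]
        intro u hu q' hq' v hv
        exact hu q' (Relation.ReflTransGen.head hpq hq') v hv
      | mu A' =>
        rw [Int.I_mu A' η p hWF htv, Int.I_mu A' η q hWF htv]
        refine ihn (unfoldMu A') ?_ (WF_unfold hWF)
        have h1 : headMu (unfoldMu A') = headMu A' := headMu_unfold hWF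
        have h2 : headMu (Ty.mu A') = headMu A' + 1 := rfl
        omega

/-- Hereditariness along the reflexive–transitive closure. -/
lemma hered_star {W : Type*} {acc : W → W → Prop} {V : Type*} {ap : V → V → V}
    (Int : Interp W acc V ap) (hwf : ConverselyWF acc)
    {η : ℕ → W → Set V} (hη : Hereditary acc η)
    {p q : W} (h : Relation.ReflTransGen acc p q) {A : Ty} (hA : WF A) :
    Int.I A η p ⊆ Int.I A η q := by
  induction h with
  | refl => exact subset_rfl
  | tail _ hbc ih => exact ih.trans (hered_step Int hwf hη _ _ hbc A hA)

/-- `I(•A)` computed without a ⊤-variant side condition. -/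
lemma I_box' {W : Type*} {acc : W → W → Prop} {V : Type*} {ap : V → V → V}
    (Int : Interp W acc V ap) {A : Ty} (hA : WF A) (η : ℕ → W → Set V) (q : W) :
    Int.I (.box A) η q = {u | ∀ s, acc q s → u ∈ Int.I A η s} := by
  by_cases h : IsTV A
  · have hb : IsTV (.box A) := h
    rw [Int.I_tv (.box A) η q hA hb]
    ext u
    simp only [Set.mem_univ, Set.mem_setOf_eq, true_iff]
    intro s _
    rw [Int.I_tv A η s hA h]
    trivial
  · have hb : ¬ IsTV (.box A) := h
    exact Int.I_box A η q hA hb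

lemma decompose_step {W : Type*} {acc : W → W → Prop} {p q q' : W}
    (hpq : acc p q) (h : Relation.ReflTransGen acc q q') :
    ∃ t, Relation.ReflTransGen acc p t ∧ acc t q' := by
  induction h with
  | refl => exact ⟨p, Relation.ReflTransGen.refl, hpq⟩
  | tail hqb hbc _ =>
    exact ⟨_, Relation.ReflTransGen.head hpq hqb, hbc⟩

/-- Over a well-founded frame, `I(•(A → B))^η_p = I(•A → •B)^η_p` holds for all type
expressions, hereditary type environments and worlds iff the accessibility relation is
locally linear. -/
theorem statement2
    (W : Type*) (hW : Nonempty W) (acc : W → W → Prop) (hwf : ConverselyWF acc)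
    (V : Type*) (alg : LambdaAlgebra V) (Int : Interp W acc V alg.ap) :
    (∀ A B : Ty, WF A → WF B → ∀ η : ℕ → W → Set V, Hereditary acc η → ∀ p : W,
        Int.I (.box (.arrow A B)) η p = Int.I (.arrow (.box A) (.box B)) η p) ↔
      LocallyLinear acc := by
  constructor
  · -- the semantic equation implies local linearity
    intro h p q hpq
    set η : ℕ → W → Set V := fun X s =>
      if X = 0 then {_v : V | Relation.ReflTransGen acc q s}
      else if X = 1 then
        {_v : V | ∃ r, Relation.ReflTransGen acc p r ∧ acc r s ∧
          ∀ s', acc r s' → Relation.ReflTransGen acc q s'}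
      else Set.univ with hηdef
    have hη : Hereditary acc η := by
      intro X p' q' hp' v hv
      by_cases h0 : X = 0
      · subst h0
        simp only [hηdef, if_pos rfl, Set.mem_setOf_eq] at hv ⊢
        exact hv.tail hp'
      · by_cases h1 : X = 1
        · subst h1
          simp only [hηdef, if_neg (by omega : (1:ℕ) ≠ 0), if_pos rfl,
            Set.mem_setOf_eq] at hv ⊢
          obtain ⟨r, _, hrp', hr⟩ := hv
          exact ⟨p', Relation.ReflTransGen.tail (by exact ‹Relation.ReflTransGen acc p r›) hrp',
            hp', fun s' hs' => Relation.ReflTransGen.tail (hr p' hrp') hs'⟩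
        · simp only [hηdef, if_neg h0, if_neg h1]
          exact Set.mem_univ v
    obtain ⟨v₀⟩ := alg.nonempty
    have heq := h (.var 0) (.var 1) trivial trivial η hη p
    have hntv01 : ¬ IsTV (Ty.arrow (.var 0) (.var 1)) := by
      unfold IsTV
      simp [tvAux]
    have hntvb : ¬ IsTV (Ty.box (.var 0)) := by
      unfold IsTV
      simp [tvAux]
    have hntvb1 : ¬ IsTV (Ty.box (.var 1)) := by
      unfold IsTV
      simp [tvAux]
    have hntvB : ¬ IsTV (Ty.box (.arrow (.var 0) (.var 1))) := hntv01
    have hntvA : ¬ IsTV (Ty.arrow (.box (.var 0)) (.box (.var 1))) := hntvb1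
    have hmem : v₀ ∈ Int.I (.arrow (.box (.var 0)) (.box (.var 1))) η p := by
      rw [Int.I_arrow _ _ η p (by trivial) (by trivial) hntvA]
      intro t hpt v hv
      rw [Int.I_box _ η t (by trivial) hntvb] at hv
      rw [Int.I_box _ η t (by trivial) hntvb1]
      intro s hts
      rw [Int.I_var]
      show _ ∈ η 1 s
      simp only [hηdef, if_neg (by omega : (1:ℕ) ≠ 0), if_pos rfl, Set.mem_setOf_eq]
      refine ⟨t, hpt, hts, fun s' hs' => ?_⟩
      have := hv s' hs'
      rw [Int.I_var] at this
      simpa only [hηdef, if_pos rfl, Set.mem_setOf_eq] using this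
    rw [← heq] at hmem
    rw [Int.I_box _ η p (by trivial) hntvB] at hmem
    have hq := hmem q hpq
    rw [Int.I_arrow _ _ η q (by trivial) (by trivial) hntv01] at hq
    have hv₀ : v₀ ∈ Int.I (.var 0) η q := by
      rw [Int.I_var]
      show v₀ ∈ η 0 q
      simp only [hηdef, if_pos rfl, Set.mem_setOf_eq]
      exact Relation.ReflTransGen.refl
    have := hq q Relation.ReflTransGen.refl v₀ hv₀
    rw [Int.I_var] at this
    simpa only [hηdef, if_neg (by omega : (1:ℕ) ≠ 0), if_pos rfl, ↓reduceIte, Set.mem_setOf_eq] using this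
  · -- local linearity implies the semantic equation
    intro hll A B hA hB η hη p
    by_cases htv : tvAux B 0 0 = true
    · have h1 : IsTV (Ty.box (.arrow A B)) := htv
      have h2 : IsTV (Ty.arrow (.box A) (.box B)) := htv
      rw [Int.I_tv _ η p (show WF (Ty.box (.arrow A B)) from ⟨hA, hB⟩) h1,
        Int.I_tv _ η p (show WF (Ty.arrow (.box A) (.box B)) from ⟨hA, hB⟩) h2]
    · have hntvAB : ¬ IsTV (Ty.arrow A B) := htv
      have hntvB : ¬ IsTV (Ty.box (.arrow A B)) := htv
      have hntvA : ¬ IsTV (Ty.arrow (.box A) (.box B)) := htv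
      rw [I_box' Int (show WF (Ty.arrow A B) from ⟨hA, hB⟩) η p,
        Int.I_arrow (Ty.box A) (Ty.box B) η p hA hB hntvA]
      ext u
      simp only [Set.mem_setOf_eq]
      constructor
      · -- `I(•(A → B)) ⊆ I(•A → •B)`
        intro hu t hpt v hv
        rw [I_box' Int hA η t] at hv
        rw [I_box' Int hB η t]
        intro s' hts'
        rcases Relation.ReflTransGen.cases_head hpt with heq' | ⟨c, hpc, hct⟩
        · subst heq'
          have := hu s' hts'
          rw [Int.I_arrow A B η s' hA hB hntvAB] at this
          exact this s' Relation.ReflTransGen.refl v (hv s' hts')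
        · have := hu c hpc
          rw [Int.I_arrow A B η c hA hB hntvAB] at this
          exact this s' (Relation.ReflTransGen.tail hct hts') v (hv s' hts')
      · -- `I(•A → •B) ⊆ I(•(A → B))`
        intro hu q₀ hq₀
        rw [Int.I_arrow A B η q₀ hA hB hntvAB]
        intro q' hq' v hv
        obtain ⟨t, hpt, htq'⟩ := decompose_step hq₀ hq'
        obtain ⟨r, htr, hrq', hr⟩ := hll t q' htq'
        have hpr : Relation.ReflTransGen acc p r := hpt.trans htr
        have hvr : v ∈ Int.I (.box A) η r := by
          rw [I_box' Int hA η r]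
          intro s hrs
          exact hered_star Int hwf hη (hr s hrs) hA hv
        have := hu r hpr v hvr
        rw [I_box' Int hB η r] at this
        exact this q' hrq'

end LambdaA
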